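/- Let γₙ be the product on ℝⁿ of n copies of the standard normal distribution N(0,1), let L be a real d_x×n matrix and M a real d_y×n matrix. Then the covariance under γₙ of the squared Euclidean norms ‖Lz‖² and ‖Mz‖² equals 2·‖L Mᵀ‖_F²: that is, ∫ ‖Lz‖²‖Mz‖² dγₙ(z) − (∫ ‖Lz‖² dγₙ(z))·(∫ ‖Mz‖² dγₙ(z)) = 2·Σ_{i,k} ((L Mᵀ)_{ik})². -/

import Mathlib

open Matrix MeasureTheory ProbabilityTheory Real Filter

namespace Stmt13Aux



noncomputable def J (p : ℕ) : ℝ := ∫ x : ℝ, x ^ p * Real.exp (-(1/2 : ℝ) * x ^ 2)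

lemma intJ (p : ℕ) : Integrable (fun x : ℝ => x ^ p * Real.exp (-(1/2 : ℝ) * x ^ 2)) := by
  have h := integrable_rpow_mul_exp_neg_mul_sq (b := (1/2 : ℝ)) (by norm_num) (s := (p : ℝ))
    (by exact lt_of_lt_of_le (by norm_num) (Nat.cast_nonneg p))
  simpa [Real.rpow_natCast] using h

lemma tendJ (p : ℕ) : Tendsto (fun x : ℝ => x ^ p * Real.exp (-(1/2 : ℝ) * x ^ 2))
    (Filter.cocompact ℝ) (nhds 0) := by
  rw [tendsto_zero_iff_norm_tendsto_zero]
  have h := tendsto_rpow_abs_mul_exp_neg_mul_sq_cocompact (a := (1/2 : ℝ)) (by norm_num) (p : ℝ)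
  convert h using 2 with x
  rw [norm_mul, norm_pow, Real.norm_eq_abs, Real.norm_eq_abs, abs_of_pos (Real.exp_pos _),
    Real.rpow_natCast]

lemma derivJ (p : ℕ) (x : ℝ) : HasDerivAt (fun x : ℝ => x ^ (p+1) * Real.exp (-(1/2:ℝ) * x ^ 2))
    ((p+1 : ℝ) * (x ^ p * Real.exp (-(1/2:ℝ) * x ^ 2)) - x ^ (p+2) * Real.exp (-(1/2:ℝ) * x ^ 2))
    x := by
  have h1 : HasDerivAt (fun x : ℝ => -(1/2:ℝ) * x ^ 2) (-(1/2:ℝ) * (2 * x)) x := by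
    simpa using (hasDerivAt_pow 2 x).const_mul (-(1/2:ℝ))
  have h2 : HasDerivAt (fun x : ℝ => x ^ (p+1) * Real.exp (-(1/2:ℝ) * x ^ 2)) _ x :=
    ((hasDerivAt_pow (p+1) x).mul h1.exp)
  convert h2 using 1
  push_cast
  ring

lemma Jrec (p : ℕ) : J (p + 2) = (p + 1 : ℝ) * J p := by
  have key := integral_of_hasDerivAt_of_tendsto (derivJ p)
    (((intJ p).const_mul _).sub (intJ (p+2)))
    ((tendJ (p+1)).mono_left _root_.atBot_le_cocompact)
    ((tendJ (p+1)).mono_left _root_.atTop_le_cocompact)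
  rw [integral_sub ((intJ p).const_mul _) (intJ (p+2)), MeasureTheory.integral_const_mul] at key
  have : (p+1:ℝ) * J p - J (p+2) = 0 - 0 := key
  linarith

lemma J1 : J 1 = 0 := by
  have hd : ∀ x : ℝ, HasDerivAt (fun x : ℝ => -Real.exp (-(1/2:ℝ) * x ^ 2))
      (x ^ 1 * Real.exp (-(1/2:ℝ) * x ^ 2)) x := by
    intro x
    have h1 : HasDerivAt (fun x : ℝ => -(1/2:ℝ) * x ^ 2) (-(1/2:ℝ) * (2 * x)) x := by
      simpa using (hasDerivAt_pow 2 x).const_mul (-(1/2:ℝ))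
    have : HasDerivAt (fun x : ℝ => -Real.exp (-(1/2:ℝ) * x ^ 2)) _ x := h1.exp.neg
    convert this using 1
    ring
  have htend : Tendsto (fun x : ℝ => -Real.exp (-(1/2:ℝ) * x ^ 2)) (Filter.cocompact ℝ)
      (nhds 0) := by
    have := (tendJ 0).neg
    simpa using this
  have key := integral_of_hasDerivAt_of_tendsto hd (intJ 1)
    (htend.mono_left _root_.atBot_le_cocompact) (htend.mono_left _root_.atTop_le_cocompact)
  simpa [J] using key



lemma pdf01 (x : ℝ) : gaussianPDFReal 0 1 x = (√(2 * π))⁻¹ * Real.exp (-(1/2:ℝ) * x ^ 2) := by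
  unfold gaussianPDFReal
  simp only [NNReal.coe_one, mul_one, sub_zero]
  ring_nf

lemma gr01 : gaussianReal 0 1 =
    (volume : Measure ℝ).withDensity (fun x => ((Real.toNNReal (gaussianPDFReal 0 1 x) : NNReal) : ENNReal)) := by
  rw [gaussianReal_of_var_ne_zero 0 one_ne_zero]
  rfl

lemma integral_gr (g : ℝ → ℝ) :
    ∫ x, g x ∂(gaussianReal 0 1) = ∫ x, gaussianPDFReal 0 1 x * g x := by
  rw [gr01, integral_withDensity_eq_integral_smul
    (by exact (measurable_gaussianPDFReal 0 1).real_toNNReal) g]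
  congr 1
  ext x
  simp [NNReal.smul_def, Real.coe_toNNReal _ (gaussianPDFReal_nonneg 0 1 x)]

lemma integrable_gr_iff (g : ℝ → ℝ) :
    Integrable g (gaussianReal 0 1) ↔
      Integrable (fun x => gaussianPDFReal 0 1 x * g x) volume := by
  rw [gr01, integrable_withDensity_iff_integrable_smul
    (by exact (measurable_gaussianPDFReal 0 1).real_toNNReal)]
  constructor <;> intro h <;> refine h.congr (Filter.Eventually.of_forall fun x => ?_) <;>
    simp [NNReal.smul_def, Real.coe_toNNReal _ (gaussianPDFReal_nonneg 0 1 x)]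

noncomputable def G (p : ℕ) : ℝ := ∫ x, x ^ p ∂(gaussianReal 0 1)

lemma G_eq (p : ℕ) : G p = (√(2 * π))⁻¹ * J p := by
  rw [G, integral_gr]
  simp_rw [pdf01, mul_assoc]
  rw [MeasureTheory.integral_const_mul]
  congr 1
  unfold J
  congr 1; ext x; ring

lemma intG (p : ℕ) : Integrable (fun x : ℝ => x ^ p) (gaussianReal 0 1) := by
  rw [integrable_gr_iff]
  refine ((intJ p).const_mul ((√(2 * π))⁻¹)).congr
    (Filter.Eventually.of_forall fun x => ?_)
  simp only [pdf01]; ring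

lemma G0 : G 0 = 1 := by simp [G]
lemma G1 : G 1 = 0 := by rw [G_eq, J1, mul_zero]
lemma G2 : G 2 = 1 := by
  have h := Jrec 0
  norm_num at h
  rw [G_eq, h, ← G_eq, G0]
lemma G3 : G 3 = 0 := by
  have h := Jrec 1
  rw [show (1:ℕ)+2 = 3 from rfl] at h
  rw [G_eq, h, J1]
  ring
lemma G4 : G 4 = 3 := by
  have h2 := Jrec 2
  rw [show (2:ℕ)+2 = 4 from rfl] at h2
  rw [G_eq, h2]
  push_cast
  have : (√(2 * π))⁻¹ * ((2 + 1) * J 2) = 3 * ((√(2 * π))⁻¹ * J 2) := by ring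
  rw [this, ← G_eq, G2]
  norm_num


lemma pi_integral {n : ℕ} (f : Fin n → ℝ → ℝ) :
    ∫ x : Fin n → ℝ, ∏ i, f i (x i) ∂(Measure.pi fun _ => gaussianReal 0 1) =
      ∏ i, ∫ x, f i x ∂(gaussianReal 0 1) := by
  letI : MeasureSpace ℝ := ⟨gaussianReal 0 1⟩
  haveI : SigmaFinite (volume : Measure ℝ) := by
    show SigmaFinite (gaussianReal 0 1)
    infer_instance
  exact MeasureTheory.integral_fin_nat_prod_eq_prod f

lemma pi_integrable {n : ℕ} (f : Fin n → ℝ → ℝ)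
    (hf : ∀ i, Integrable (f i) (gaussianReal 0 1)) :
    Integrable (fun x : Fin n → ℝ => ∏ i, f i (x i))
      (Measure.pi fun _ => gaussianReal 0 1) := by
  letI : MeasureSpace ℝ := ⟨gaussianReal 0 1⟩
  haveI : SigmaFinite (volume : Measure ℝ) := by
    show SigmaFinite (gaussianReal 0 1)
    infer_instance
  exact MeasureTheory.Integrable.fin_nat_prod hf

lemma sum4_swap {α β γ δ : Type*} [Fintype α] [Fintype β] [Fintype γ] [Fintype δ]
    (f : α → β → γ → δ → ℝ) :
    ∑ a, ∑ b, ∑ c, ∑ d, f a b c d = ∑ c, ∑ d, ∑ a, ∑ b, f a b c d := by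
  have h1 : ∑ a, ∑ b, ∑ c, ∑ d, f a b c d
      = ∑ p : α × β, ∑ q : γ × δ, f p.1 p.2 q.1 q.2 := by
    rw [Fintype.sum_prod_type _]
    exact Finset.sum_congr rfl fun a _ => Finset.sum_congr rfl fun b _ =>
      (Fintype.sum_prod_type (fun q : γ × δ => f a b q.1 q.2)).symm
  have h2 : ∑ c, ∑ d, ∑ a, ∑ b, f a b c d
      = ∑ q : γ × δ, ∑ p : α × β, f p.1 p.2 q.1 q.2 := by
    rw [Fintype.sum_prod_type _]
    exact Finset.sum_congr rfl fun c _ => Finset.sum_congr rfl fun d _ =>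
      (Fintype.sum_prod_type (fun p : α × β => f p.1 p.2 c d)).symm
  rw [h1, h2]
  exact Finset.sum_comm


variable {n : ℕ}

local notation "π" => (Measure.pi fun _ : Fin n => gaussianReal 0 1)

lemma prod_pow_single (x : Fin n → ℝ) (j : Fin n) :
    ∏ i, (x i) ^ (if i = j then 1 else 0) = x j := by
  have : ∀ i : Fin n, (x i) ^ (if i = j then 1 else 0) = if i = j then x i else 1 := by
    intro i; by_cases h : i = j <;> simp [h]
  rw [Finset.prod_congr rfl (fun i _ => this i)]
  simp

def e2 (j k : Fin n) (i : Fin n) : ℕ := (if i = j then 1 else 0) + (if i = k then 1 else 0)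

def e4 (j k l m : Fin n) (i : Fin n) : ℕ :=
  (if i = j then 1 else 0) + (if i = k then 1 else 0) +
    ((if i = l then 1 else 0) + (if i = m then 1 else 0))

lemma rep2 (j k : Fin n) (x : Fin n → ℝ) :
    x j * x k = ∏ i, (x i) ^ (e2 j k i) := by
  simp_rw [e2, pow_add, Finset.prod_mul_distrib, prod_pow_single]

lemma rep4 (j k l m : Fin n) (x : Fin n → ℝ) :
    x j * x k * (x l * x m) = ∏ i, (x i) ^ (e4 j k l m i) := by
  simp_rw [e4, pow_add, Finset.prod_mul_distrib, prod_pow_single]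

lemma int2 (j k : Fin n) : Integrable (fun x : Fin n → ℝ => x j * x k) π := by
  have := pi_integrable (fun i => fun t : ℝ => t ^ (e2 j k i)) (fun i => intG _)
  exact this.congr (Filter.Eventually.of_forall fun x => (rep2 j k x).symm)

lemma int4 (j k l m : Fin n) :
    Integrable (fun x : Fin n → ℝ => x j * x k * (x l * x m)) π := by
  have := pi_integrable (fun i => fun t : ℝ => t ^ (e4 j k l m i)) (fun i => intG _)
  exact this.congr (Filter.Eventually.of_forall fun x => (rep4 j k l m x).symm)

lemma mom2 (j k : Fin n) :
    ∫ x : Fin n → ℝ, x j * x k ∂π = if j = k then 1 else 0 := by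
  rw [show (fun x : Fin n → ℝ => x j * x k) = fun x => ∏ i, (x i) ^ (e2 j k i) from
    funext (rep2 j k)]
  rw [pi_integral (fun i => fun t : ℝ => t ^ (e2 j k i))]
  by_cases hjk : j = k
  · subst hjk
    rw [if_pos rfl]
    have : ∀ i : Fin n, G (e2 j j i) = if i = j then G 2 else 1 := by
      intro i; by_cases h : i = j <;> simp [e2, h, G0]
    calc ∏ i, ∫ x, x ^ (e2 j j i) ∂(gaussianReal 0 1) = ∏ i, G (e2 j j i) := rfl
      _ = ∏ i, if i = j then G 2 else 1 := Finset.prod_congr rfl (fun i _ => this i)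
      _ = 1 := by simp [G2]
  · simp only [hjk, if_false]
    refine Finset.prod_eq_zero (Finset.mem_univ j) ?_
    have : e2 j k j = 1 := by simp [e2, hjk]
    show (∫ x, x ^ (e2 j k j) ∂(gaussianReal 0 1)) = 0
    rw [this]
    exact G1

lemma prodG_pair {a b : Fin n} (hab : a ≠ b) (f : Fin n → ℕ)
    (hf : ∀ i, f i = (if i = a then 2 else 0) + (if i = b then 2 else 0)) :
    ∏ i, G (f i) = 1 := by
  have hba : b ≠ a := Ne.symm hab
  have hpt : ∀ i, G (f i) = (if i = a then G 2 else 1) * (if i = b then G 2 else 1) := by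
    intro i
    by_cases h1 : i = a <;> by_cases h2 : i = b
    · exact absurd (h1.symm.trans h2) hab
    · simp [hf, h1, h2, hab, hba]
    · simp [hf, h1, h2, hab, hba]
    · simp [hf, h1, h2, G0]
  rw [Finset.prod_congr rfl (fun i _ => hpt i), Finset.prod_mul_distrib]
  simp [G2]

lemma prodG_four (a : Fin n) (f : Fin n → ℕ) (hf : ∀ i, f i = if i = a then 4 else 0) :
    ∏ i, G (f i) = 3 := by
  have hpt : ∀ i, G (f i) = if i = a then G 4 else 1 := by
    intro i; by_cases h : i = a <;> simp [hf, h, G0]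
  rw [Finset.prod_congr rfl (fun i _ => hpt i)]
  simp [G4]

lemma prodG_zero (j k l m : Fin n) (i0 : Fin n) (h : e4 j k l m i0 = 1) :
    ∏ i, G (e4 j k l m i) = 0 := by
  refine Finset.prod_eq_zero (Finset.mem_univ i0) ?_
  rw [h]; exact G1

lemma mom4 (j k l m : Fin n) :
    ∫ x : Fin n → ℝ, x j * x k * (x l * x m) ∂π =
      (if j = k then (1:ℝ) else 0) * (if l = m then 1 else 0) +
      (if j = l then (1:ℝ) else 0) * (if k = m then 1 else 0) +
      (if j = m then (1:ℝ) else 0) * (if k = l then 1 else 0) := by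
  rw [show (fun x : Fin n → ℝ => x j * x k * (x l * x m)) =
    fun x => ∏ i, (x i) ^ (e4 j k l m i) from funext (rep4 j k l m)]
  rw [pi_integral (fun i => fun t : ℝ => t ^ (e4 j k l m i))]
  show (∏ i, G (e4 j k l m i)) = _
  by_cases hjk : j = k
  · subst hjk
    by_cases hjl : j = l
    · subst hjl
      by_cases hjm : j = m
      · subst hjm
        rw [prodG_four j _ (fun i => by by_cases h : i = j <;> simp [e4, h])]
        norm_num
      · have hmj : m ≠ j := Ne.symm hjm
        rw [prodG_zero _ _ _ _ m (by simp [e4, hmj])]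
        simp [hjm]
    · have hlj : l ≠ j := Ne.symm hjl
      by_cases hjm : j = m
      · subst hjm
        rw [prodG_zero _ _ _ _ l (by simp [e4, hlj])]
        simp [hjl, hlj]
      · by_cases hlm : l = m
        · subst hlm
          rw [prodG_pair hjl _ (fun i => by
            by_cases h1 : i = j <;> by_cases h2 : i = l <;> simp [e4, h1, h2, hjl, hlj])]
          simp [hjl, hjm]
        · rw [prodG_zero _ _ _ _ l (by simp [e4, hlj, hlm])]
          simp [hjl, hjm, hlm]
  · have hkj : k ≠ j := Ne.symm hjk
    by_cases hjl : j = l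
    · subst hjl
      by_cases hkm : k = m
      · subst hkm
        rw [prodG_pair hjk _ (fun i => by
          by_cases h1 : i = j <;> by_cases h2 : i = k <;> simp [e4, h1, h2, hjk, hkj])]
        simp [hjk, hkj]
      · rw [prodG_zero _ _ _ _ k (by simp [e4, hkj, hkm])]
        simp [hjk, hkm, hkj]
    · by_cases hjm : j = m
      · subst hjm
        by_cases hkl : k = l
        · subst hkl
          rw [prodG_pair hjk _ (fun i => by
            by_cases h1 : i = j <;> by_cases h2 : i = k <;> simp [e4, h1, h2, hjk, hkj])]
          simp [hjk, hjl]
        · rw [prodG_zero _ _ _ _ k (by simp [e4, hkj, hkl])]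
          simp [hjk, hjl, hkl]
      · rw [prodG_zero _ _ _ _ j (by simp [e4, hjk, hjl, hjm])]
        simp [hjk, hjl, hjm]



section main
variable {dx dy : ℕ} (L : Matrix (Fin dx) (Fin n) ℝ) (M : Matrix (Fin dy) (Fin n) ℝ)

private noncomputable def gA (L : Matrix (Fin dx) (Fin n) ℝ) : Fin n → Fin n → ℝ :=
  fun j k => ∑ i, L i j * L i k

lemma quad_eq (z : Fin n → ℝ) :
    L.mulVec z ⬝ᵥ L.mulVec z = ∑ j, ∑ k, gA L j k * (z j * z k) := by
  calc L.mulVec z ⬝ᵥ L.mulVec z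
      = ∑ i, (∑ j, L i j * z j) * (∑ k, L i k * z k) := by
        simp [dotProduct, Matrix.mulVec]
    _ = ∑ i, ∑ j, ∑ k, (L i j * z j) * (L i k * z k) :=
        Finset.sum_congr rfl fun i _ => Finset.sum_mul_sum _ _ _ _
    _ = ∑ j, ∑ i, ∑ k, (L i j * z j) * (L i k * z k) := Finset.sum_comm
    _ = ∑ j, ∑ k, ∑ i, (L i j * z j) * (L i k * z k) :=
        Finset.sum_congr rfl fun j _ => Finset.sum_comm
    _ = ∑ j, ∑ k, gA L j k * (z j * z k) := by
        refine Finset.sum_congr rfl fun j _ => Finset.sum_congr rfl fun k _ => ?_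
        rw [gA, Finset.sum_mul]
        exact Finset.sum_congr rfl fun i _ => by ring

lemma mean_eq : ∫ z : Fin n → ℝ, L.mulVec z ⬝ᵥ L.mulVec z ∂π = ∑ j, gA L j j := by
  rw [show (fun z : Fin n → ℝ => L.mulVec z ⬝ᵥ L.mulVec z)
      = fun z => ∑ j, ∑ k, gA L j k * (z j * z k) from funext (quad_eq L)]
  rw [integral_finset_sum _ fun j _ =>
    integrable_finset_sum _ fun k _ => (int2 j k).const_mul _]
  refine Finset.sum_congr rfl fun j _ => ?_
  rw [integral_finset_sum _ fun k _ => (int2 j k).const_mul _]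
  have : ∀ k : Fin n, (∫ z : Fin n → ℝ, gA L j k * (z j * z k) ∂π)
      = if j = k then gA L j k else 0 := by
    intro k
    rw [MeasureTheory.integral_const_mul, mom2]
    by_cases h : j = k <;> simp [h]
  rw [Finset.sum_congr rfl fun k _ => this k]
  simp

theorem stmt_13' :
    (∫ z : Fin n → ℝ, (L.mulVec z ⬝ᵥ L.mulVec z) * (M.mulVec z ⬝ᵥ M.mulVec z) ∂π) -
      (∫ z : Fin n → ℝ, L.mulVec z ⬝ᵥ L.mulVec z ∂π) *
        (∫ z : Fin n → ℝ, M.mulVec z ⬝ᵥ M.mulVec z ∂π) =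
      2 * ∑ i : Fin dx, ∑ k : Fin dy, ((L * Mᵀ) i k) ^ 2 := by
  set A := gA L with hA
  set B := gA M with hB
  have hBsymm : ∀ l m : Fin n, B l m = B m l := fun l m =>
    Finset.sum_congr rfl fun i _ => mul_comm _ _
  -- pointwise expansion of the product
  have hprod : ∀ z : Fin n → ℝ,
      (L.mulVec z ⬝ᵥ L.mulVec z) * (M.mulVec z ⬝ᵥ M.mulVec z) =
        ∑ j, ∑ l, ∑ k, ∑ m, A j k * (z j * z k) * (B l m * (z l * z m)) := by
    intro z
    rw [quad_eq L z, quad_eq M z, Finset.sum_mul_sum]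
    exact Finset.sum_congr rfl fun j _ => Finset.sum_congr rfl fun l _ =>
      Finset.sum_mul_sum _ _ _ _
  -- integral of the product
  have hsecond : (∫ z : Fin n → ℝ,
      (L.mulVec z ⬝ᵥ L.mulVec z) * (M.mulVec z ⬝ᵥ M.mulVec z) ∂π) =
      ∑ j, ∑ l, ∑ k, ∑ m, A j k * B l m *
        ((if j = k then (1:ℝ) else 0) * (if l = m then 1 else 0) +
         (if j = l then (1:ℝ) else 0) * (if k = m then 1 else 0) +
         (if j = m then (1:ℝ) else 0) * (if k = l then 1 else 0)) := by
    rw [show (fun z : Fin n → ℝ =>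
        (L.mulVec z ⬝ᵥ L.mulVec z) * (M.mulVec z ⬝ᵥ M.mulVec z))
      = fun z => ∑ j, ∑ l, ∑ k, ∑ m, A j k * (z j * z k) * (B l m * (z l * z m))
      from funext hprod]
    have hint : ∀ (j l k m : Fin n), Integrable
        (fun z : Fin n → ℝ => A j k * (z j * z k) * (B l m * (z l * z m))) π := by
      intro j l k m
      refine ((int4 j k l m).const_mul (A j k * B l m)).congr
        (Filter.Eventually.of_forall fun z => by ring)
    rw [integral_finset_sum _ fun j _ => integrable_finset_sum _ fun l _ =>
      integrable_finset_sum _ fun k _ => integrable_finset_sum _ fun m _ => hint j l k m]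
    refine Finset.sum_congr rfl fun j _ => ?_
    rw [integral_finset_sum _ fun l _ =>
      integrable_finset_sum _ fun k _ => integrable_finset_sum _ fun m _ => hint j l k m]
    refine Finset.sum_congr rfl fun l _ => ?_
    rw [integral_finset_sum _ fun k _ => integrable_finset_sum _ fun m _ => hint j l k m]
    refine Finset.sum_congr rfl fun k _ => ?_
    rw [integral_finset_sum _ fun m _ => hint j l k m]
    refine Finset.sum_congr rfl fun m _ => ?_
    rw [show (fun z : Fin n → ℝ => A j k * (z j * z k) * (B l m * (z l * z m)))
      = fun z => (A j k * B l m) * (z j * z k * (z l * z m)) from funext fun z => by ring]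
    rw [MeasureTheory.integral_const_mul, mom4]
  -- RHS algebra
  have hRHS : ∑ i : Fin dx, ∑ k : Fin dy, ((L * Mᵀ) i k) ^ 2
      = ∑ j, ∑ j', A j j' * B j j' := by
    have e1 : ∀ (i : Fin dx) (k : Fin dy), ((L * Mᵀ) i k) ^ 2
        = ∑ j, ∑ j', (L i j * M k j) * (L i j' * M k j') := by
      intro i k
      rw [Matrix.mul_apply, sq]
      simp only [Matrix.transpose_apply]
      exact Finset.sum_mul_sum _ _ _ _
    rw [Finset.sum_congr rfl fun i _ => Finset.sum_congr rfl fun k _ => e1 i k]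
    rw [sum4_swap (fun (i : Fin dx) (k : Fin dy) (j j' : Fin n) =>
      (L i j * M k j) * (L i j' * M k j'))]
    refine Finset.sum_congr rfl fun j _ => Finset.sum_congr rfl fun j' _ => ?_
    rw [hA, hB, gA, gA, Finset.sum_mul_sum]
    exact Finset.sum_congr rfl fun i _ => Finset.sum_congr rfl fun k _ => by ring
  rw [hsecond, mean_eq L, mean_eq M, hRHS]
  -- final sum manipulation
  simp only [mul_add, mul_ite, ite_mul, mul_zero, zero_mul, mul_one, one_mul,
    Finset.sum_add_distrib, Finset.sum_ite_irrel, Finset.sum_ite_eq, Finset.sum_ite_eq',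
    Finset.sum_const_zero, Finset.mem_univ, if_true]
  rw [show ∑ j, ∑ l, A j j * B l l = (∑ j, A j j) * (∑ l, B l l) by
    rw [Finset.sum_mul_sum]]
  have hT3 : ∀ j k : Fin n, A j k * B k j = A j k * B j k := fun j k => by
    rw [hBsymm k j]
  rw [show ∑ x : Fin n, ∑ x_1 : Fin n, A x x_1 * B x_1 x
      = ∑ x : Fin n, ∑ x_1 : Fin n, A x x_1 * B x x_1 from
    Finset.sum_congr rfl fun x _ => Finset.sum_congr rfl fun x1 _ => hT3 x x1]
  rw [← hA, ← hB]
  ring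
end main


end Stmt13Aux

open Matrix MeasureTheory ProbabilityTheory

/-- The covariance of the squared Euclidean norms ‖Lz‖² and ‖Mz‖² of Gaussian
vectors equals twice the squared Frobenius norm of L Mᵀ. -/
theorem stmt_13 (n dx dy : ℕ)
    (L : Matrix (Fin dx) (Fin n) ℝ) (M : Matrix (Fin dy) (Fin n) ℝ) :
    (∫ z : Fin n → ℝ, (L.mulVec z ⬝ᵥ L.mulVec z) * (M.mulVec z ⬝ᵥ M.mulVec z)
        ∂(Measure.pi fun _ => gaussianReal 0 1)) -
      (∫ z : Fin n → ℝ, L.mulVec z ⬝ᵥ L.mulVec z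
          ∂(Measure.pi fun _ => gaussianReal 0 1)) *
        (∫ z : Fin n → ℝ, M.mulVec z ⬝ᵥ M.mulVec z
          ∂(Measure.pi fun _ => gaussianReal 0 1)) =
      2 * ∑ i : Fin dx, ∑ k : Fin dy, ((L * Mᵀ) i k) ^ 2 :=
  Stmt13Aux.stmt_13' L M
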